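/- Let E be a real Banach space and let K be a convex subset of E that is compact and metrizable in the weak topology. Then the exposed points of K are weakly dense in the affine exposed points of K, which are weakly dense in the extreme points of K; that is, AExp(K) is contained in the weak closure of Exp(K), and Ext(K) is contained in the weak closure of AExp(K). -/

import Mathlib

open Set Topology Pointwise

namespace Stmt13Aux

noncomputable section

variable {E : Type*} [NormedAddCommGroup E] [NormedSpace ℝ E]

instance : ContinuousSMul ℝ (WeakSpace ℝ E) :=
  inferInstanceAs (ContinuousSMul ℝ (WeakBilin (topDualPairing ℝ E).flip))

instance : LocallyConvexSpace ℝ (WeakSpace ℝ E) :=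
  inferInstanceAs (LocallyConvexSpace ℝ (WeakBilin (topDualPairing ℝ E).flip))

lemma contEval (g : E →L[ℝ] ℝ) : Continuous fun x : WeakSpace ℝ E => g x :=
  WeakBilin.eval_continuous (topDualPairing ℝ E).flip g

instance : T2Space (WeakSpace ℝ E) := by
  constructor
  intro x y hxy
  obtain ⟨f, hf⟩ := SeparatingDual.exists_separating_of_ne (R := ℝ) (V := E)
    (fun h => hxy h)
  exact separated_by_continuous (contEval f) hf

lemma summable_half : Summable (fun n : ℕ => ((2:ℝ)⁻¹) ^ n) :=
  summable_geometric_of_lt_one (by norm_num) (by norm_num)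

lemma summable_quarter : Summable (fun n : ℕ => ((4:ℝ)⁻¹) ^ n) :=
  summable_geometric_of_lt_one (by norm_num) (by norm_num)

lemma half_mul_half (n : ℕ) : ((2:ℝ)⁻¹) ^ n * ((2:ℝ)⁻¹) ^ n = ((4:ℝ)⁻¹) ^ n := by
  rw [← mul_pow]; norm_num

variable (h : ℕ → E →L[ℝ] ℝ)

/-- `v` has coordinates bounded by a multiple of `2⁻ⁿ`. -/
def Pb (v : WeakSpace ℝ E) : Prop := ∃ C : ℝ, 0 ≤ C ∧ ∀ n, |h n v| ≤ C * ((2:ℝ)⁻¹) ^ n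

def bil (v w : WeakSpace ℝ E) : ℝ := ∑' n, h n v * h n w

def qd (v : WeakSpace ℝ E) : ℝ := bil h v v

variable {h}

lemma Pb.sub {v w : WeakSpace ℝ E} (hv : Pb h v) (hw : Pb h w) : Pb h (v - w) := by
  obtain ⟨C, hC0, hC⟩ := hv; obtain ⟨D, hD0, hD⟩ := hw
  refine ⟨C + D, by linarith, fun n => ?_⟩
  have : h n (v - w) = h n v - h n w := map_sub (h n) v w
  rw [this, add_mul]
  exact (abs_sub _ _).trans (add_le_add (hC n) (hD n))

lemma Pb.smul {v : WeakSpace ℝ E} (r : ℝ) (hv : Pb h v) : Pb h (r • v) := by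
  obtain ⟨C, hC0, hC⟩ := hv
  refine ⟨|r| * C, by positivity, fun n => ?_⟩
  have : h n (r • v) = r * h n v := map_smul (h n) r v
  rw [this, abs_mul, mul_assoc]
  exact mul_le_mul_of_nonneg_left (hC n) (abs_nonneg r)

lemma summable_mul {v w : WeakSpace ℝ E} (hv : Pb h v) (hw : Pb h w) :
    Summable fun n => h n v * h n w := by
  obtain ⟨C, hC0, hC⟩ := hv; obtain ⟨D, hD0, hD⟩ := hw
  refine Summable.of_norm_bounded (g := fun n => C * D * ((4:ℝ)⁻¹) ^ n)
    (summable_quarter.mul_left _) (fun n => ?_)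
  have h1 : ‖h n v * h n w‖ = |h n v| * |h n w| := abs_mul _ _
  rw [h1]
  calc |h n v| * |h n w| ≤ (C * ((2:ℝ)⁻¹) ^ n) * (D * ((2:ℝ)⁻¹) ^ n) :=
        mul_le_mul (hC n) (hD n) (abs_nonneg _) (by positivity)
    _ = C * D * ((4:ℝ)⁻¹) ^ n := by rw [← half_mul_half]; ring

lemma bil_comm (v w : WeakSpace ℝ E) : bil h v w = bil h w v :=
  tsum_congr fun n => mul_comm _ _

lemma qd_nonneg (v : WeakSpace ℝ E) : 0 ≤ qd h v :=
  tsum_nonneg fun n => mul_self_nonneg _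

lemma bil_smul_left (r : ℝ) (v w : WeakSpace ℝ E) : bil h (r • v) w = r * bil h v w := by
  rw [bil, bil, ← tsum_mul_left]
  refine tsum_congr fun n => ?_
  have e : h n (r • v) = r * h n v := map_smul (h n) r v
  rw [e]; ring

lemma bil_sub_right {v a b : WeakSpace ℝ E} (hv : Pb h v) (ha : Pb h a) (hb : Pb h b) :
    bil h v (a - b) = bil h v a - bil h v b := by
  rw [bil, bil, bil, ← Summable.tsum_sub (summable_mul hv ha) (summable_mul hv hb)]
  refine tsum_congr fun n => ?_
  have e : h n (a - b) = h n a - h n b := map_sub (h n) a b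
  rw [e]; ring

lemma bil_neg_right (v w : WeakSpace ℝ E) : bil h v (-w) = -(bil h v w) := by
  rw [bil, bil, ← tsum_neg]
  refine tsum_congr fun n => ?_
  have e : h n (-w) = -(h n w) := map_neg (h n) w
  rw [e]; ring

lemma qd_expand {a b : WeakSpace ℝ E} (ha : Pb h a) (hb : Pb h b) :
    qd h (a + b) = qd h a + 2 * bil h a b + qd h b := by
  have hs1 := summable_mul ha ha
  have hs2 := summable_mul ha hb
  have hs3 := summable_mul hb hb
  have key : ∀ n, h n (a + b) * h n (a + b)
      = (h n a * h n a + 2 * (h n a * h n b)) + h n b * h n b := by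
    intro n
    have e : h n (a + b) = h n a + h n b := map_add (h n) a b
    rw [e]; ring
  rw [qd, bil]
  calc ∑' n, h n (a + b) * h n (a + b)
      = ∑' n, ((h n a * h n a + 2 * (h n a * h n b)) + h n b * h n b) := tsum_congr key
    _ = (∑' n, (h n a * h n a + 2 * (h n a * h n b))) + ∑' n, h n b * h n b :=
        Summable.tsum_add (hs1.add (hs2.mul_left 2)) hs3
    _ = ((∑' n, h n a * h n a) + ∑' n, 2 * (h n a * h n b)) + ∑' n, h n b * h n b := by
        rw [Summable.tsum_add hs1 (hs2.mul_left 2)]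
    _ = qd h a + 2 * bil h a b + qd h b := by
        rw [tsum_mul_left]; rfl

lemma qd_pos {v : WeakSpace ℝ E} (hv : Pb h v) (hne : ∃ n, h n v ≠ 0) : 0 < qd h v := by
  obtain ⟨n, hn⟩ := hne
  have hsum := summable_mul hv hv
  have : h n v * h n v ≤ qd h v := Summable.le_tsum hsum n fun j _ => mul_self_nonneg _
  have hpos : 0 < h n v * h n v := mul_self_pos.mpr hn
  linarith

/-- bound `qd h v ≤ 6` when all coordinates are at most `2 · 2⁻ⁿ`. -/
lemma qd_le_six {v : WeakSpace ℝ E} (hv : ∀ n, |h n v| ≤ 2 * ((2:ℝ)⁻¹) ^ n) :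
    qd h v ≤ 6 := by
  have hsum : Summable fun n => h n v * h n v :=
    summable_mul ⟨2, by norm_num, hv⟩ ⟨2, by norm_num, hv⟩
  have hle : ∀ n, h n v * h n v ≤ 4 * ((4:ℝ)⁻¹) ^ n := by
    intro n
    have h1 : |h n v| * |h n v| ≤ (2 * ((2:ℝ)⁻¹) ^ n) * (2 * ((2:ℝ)⁻¹) ^ n) :=
      mul_le_mul (hv n) (hv n) (abs_nonneg _) (by positivity)
    calc h n v * h n v = |h n v| * |h n v| := (abs_mul_abs_self _).symm
      _ ≤ (2 * ((2:ℝ)⁻¹) ^ n) * (2 * ((2:ℝ)⁻¹) ^ n) := h1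
      _ = 4 * ((4:ℝ)⁻¹) ^ n := by rw [← half_mul_half]; ring
  have := Summable.tsum_le_tsum hle hsum (summable_quarter.mul_left 4)
  rw [tsum_mul_left, tsum_geometric_of_lt_one (by norm_num) (by norm_num)] at this
  rw [qd, bil]
  refine this.trans (by norm_num)

lemma nonpos_of_small_t {a c : ℝ} (hc : 0 ≤ c)
    (H : ∀ t : ℝ, 0 < t → t ≤ 1 → 2 * a ≤ t * c) : a ≤ 0 := by
  by_contra hpos
  push_neg at hpos
  rcases eq_or_lt_of_le hc with hc0 | hc0
  · have := H 1 one_pos le_rfl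
    rw [← hc0] at this
    linarith
  · have ht1 : (0:ℝ) < min 1 (a / c) := lt_min one_pos (div_pos hpos hc0)
    have := H _ ht1 (min_le_left _ _)
    have h2 : min 1 (a / c) * c ≤ (a / c) * c :=
      mul_le_mul_of_nonneg_right (min_le_right _ _) hc
    rw [div_mul_cancel₀ _ (ne_of_gt hc0)] at h2
    linarith

/-- continuity of `y ↦ qd h (y - z)` on `K` in the weak topology. -/
lemma contOn_qd {K : Set (WeakSpace ℝ E)}
    (hbK : ∀ n, ∀ y ∈ K, |h n y| ≤ ((2:ℝ)⁻¹) ^ n) {z : WeakSpace ℝ E} (hz : Pb h z) :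
    ContinuousOn (fun y : WeakSpace ℝ E => qd h (y - z)) K := by
  obtain ⟨C, hC0, hC⟩ := hz
  rw [continuousOn_iff_continuous_restrict]
  show Continuous fun (y : K) => qd h ((y : WeakSpace ℝ E) - z)
  have hrw : (fun (y : K) => qd h ((y : WeakSpace ℝ E) - z))
      = fun (y : K) => ∑' n, (h n (y : WeakSpace ℝ E) - h n z) * (h n (y : WeakSpace ℝ E) - h n z) := by
    funext y
    rw [qd, bil]
    refine tsum_congr fun n => ?_
    have e : h n ((y : WeakSpace ℝ E) - z) = h n (y : WeakSpace ℝ E) - h n z :=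
      map_sub (h n) _ z
    rw [e]
  rw [hrw]
  refine continuous_tsum (fun n => ?_) ((summable_quarter.mul_left ((1+C)*(1+C)))) (fun n y => ?_)
  · have hc : Continuous fun y : K => h n (y : WeakSpace ℝ E) :=
      (contEval (h n)).comp continuous_subtype_val
    exact ((hc.sub continuous_const).mul (hc.sub continuous_const))
  · have hy1 : |h n (y : WeakSpace ℝ E)| ≤ ((2:ℝ)⁻¹) ^ n := hbK n _ y.2
    have hz1 : |h n z| ≤ C * ((2:ℝ)⁻¹) ^ n := hC n
    have habs : |h n (y : WeakSpace ℝ E) - h n z| ≤ (1 + C) * ((2:ℝ)⁻¹) ^ n := by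
      calc |h n (y : WeakSpace ℝ E) - h n z| ≤ |h n (y : WeakSpace ℝ E)| + |h n z| :=
            abs_sub _ _
        _ ≤ ((2:ℝ)⁻¹) ^ n + C * ((2:ℝ)⁻¹) ^ n := add_le_add hy1 hz1
        _ = (1 + C) * ((2:ℝ)⁻¹) ^ n := by ring
    have : ‖(h n (y : WeakSpace ℝ E) - h n z) * (h n (y : WeakSpace ℝ E) - h n z)‖
        = |h n (y : WeakSpace ℝ E) - h n z| * |h n (y : WeakSpace ℝ E) - h n z| := abs_mul _ _
    rw [this]
    calc |h n (y : WeakSpace ℝ E) - h n z| * |h n (y : WeakSpace ℝ E) - h n z|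
        ≤ ((1 + C) * ((2:ℝ)⁻¹) ^ n) * ((1 + C) * ((2:ℝ)⁻¹) ^ n) :=
          mul_le_mul habs habs (abs_nonneg _) (by positivity)
      _ = (1 + C) * (1 + C) * ((4:ℝ)⁻¹) ^ n := by rw [← half_mul_half]; ring

/-- A farthest point (w.r.t. the quadratic form) in `K` from a point `z` is exposed. -/
lemma exposed_of_max {K : Set (WeakSpace ℝ E)}
    (hnorm : ∀ n, ‖h n‖ ≤ ((2:ℝ)⁻¹) ^ n)
    (hbK : ∀ n, ∀ y ∈ K, |h n y| ≤ ((2:ℝ)⁻¹) ^ n)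
    (hsep : ∀ v ∈ K, ∀ w ∈ K, (∀ n, h n v = h n w) → v = w)
    {z y0 : WeakSpace ℝ E} (hz : Pb h z) (hy0 : y0 ∈ K)
    (hmax : ∀ y ∈ K, qd h (y - z) ≤ qd h (y0 - z)) :
    ∃ g : E →L[ℝ] ℝ, ∀ q ∈ K, q ≠ y0 → g q < g y0 := by
  have hPbK : ∀ y ∈ K, Pb h y := fun y hy => ⟨1, zero_le_one, fun n => by
    simpa using hbK n y hy⟩
  obtain ⟨C, hC0, hC⟩ := hz
  have hPz : Pb h z := ⟨C, hC0, hC⟩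
  set w : WeakSpace ℝ E := y0 - z with hw
  have hPw : Pb h w := (hPbK y0 hy0).sub hPz
  obtain ⟨D, hD0, hD⟩ := id hPw
  have hsumg : Summable fun n => (h n w) • (h n) := by
    refine Summable.of_norm_bounded (g := fun n => D * ((4:ℝ)⁻¹) ^ n)
      (summable_quarter.mul_left _) (fun n => ?_)
    show ‖h n w • h n‖ ≤ D * ((4:ℝ)⁻¹) ^ n
    have e : ‖h n w • h n‖ ≤ ‖h n w‖ * ‖h n‖ := by
      simpa using ContinuousLinearMap.opNorm_smul_le (h n w) (h n)
    refine e.trans ?_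
    calc ‖h n w‖ * ‖h n‖ ≤ (D * ((2:ℝ)⁻¹) ^ n) * ((2:ℝ)⁻¹) ^ n := by
          refine mul_le_mul (hD n) (hnorm n) (norm_nonneg _) (by positivity)
      _ = D * ((4:ℝ)⁻¹) ^ n := by rw [mul_assoc, half_mul_half]
  refine ⟨∑' n, (h n w) • (h n), fun q hq hqy0 => ?_⟩
  have hgapp : ∀ y : WeakSpace ℝ E, (∑' n, (h n w) • (h n)) y = bil h w y := by
    intro y
    have e := ContinuousLinearMap.map_tsum
      (ContinuousLinearMap.apply ℝ ℝ (show E from y)) hsumg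
    simp only [ContinuousLinearMap.apply_apply, ContinuousLinearMap.smul_apply,
      smul_eq_mul] at e
    exact e
  have hPq := hPbK q hq
  have hPy0 := hPbK y0 hy0
  -- strict positivity of qd h (q - y0)
  have hne : ∃ n, h n (q - y0) ≠ 0 := by
    by_contra hall
    push_neg at hall
    refine hqy0 (hsep q hq y0 hy0 fun n => ?_)
    have e : h n (q - y0) = h n q - h n y0 := map_sub (h n) q y0
    have := hall n
    rw [e, sub_eq_zero] at this
    exact this
  have hqdpos : 0 < qd h (q - y0) := qd_pos (hPq.sub hPy0) hne
  -- expansion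
  have hdecomp : q - z = (q - y0) + w := by rw [hw]; abel
  have hexp : qd h (q - z) = qd h (q - y0) + 2 * bil h (q - y0) w + qd h w := by
    rw [hdecomp]; exact qd_expand (hPq.sub hPy0) hPw
  have hqz := hmax q hq
  have hwq : qd h (y0 - z) = qd h w := by rw [hw]
  have hbilneg : bil h (q - y0) w < 0 := by
    rw [hwq] at hqz
    rw [hexp] at hqz
    linarith
  have e1 : (∑' n, (h n w) • (h n)) q = bil h w q := hgapp q
  have e2 : (∑' n, (h n w) • (h n)) y0 = bil h w y0 := hgapp y0
  rw [e1, e2]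
  have e3 : bil h w q - bil h w y0 = bil h w (q - y0) := (bil_sub_right hPw hPq hPy0).symm
  have e4 : bil h w (q - y0) = bil h (q - y0) w := bil_comm _ _
  linarith [e3, e4, hbilneg, e3 ▸ e4 ▸ hbilneg]

section Geometry

lemma isCompact_convexJoin {s t : Set (WeakSpace ℝ E)} (hs : IsCompact s) (ht : IsCompact t) :
    IsCompact (convexJoin ℝ s t) := by
  have hmap : Continuous fun p : ℝ × (WeakSpace ℝ E × WeakSpace ℝ E) =>
      (1 - p.1) • p.2.1 + p.1 • p.2.2 :=
    ((continuous_const.sub continuous_fst).smul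
      (continuous_fst.comp continuous_snd)).add
      (continuous_fst.smul (continuous_snd.comp continuous_snd))
  have heq : convexJoin ℝ s t = (fun p : ℝ × (WeakSpace ℝ E × WeakSpace ℝ E) =>
      (1 - p.1) • p.2.1 + p.1 • p.2.2) '' (Icc (0:ℝ) 1 ×ˢ s ×ˢ t) := by
    ext z
    constructor
    · intro hz
      rw [mem_convexJoin] at hz
      obtain ⟨a, ha, b, hb, hseg⟩ := hz
      rw [segment_eq_image] at hseg
      obtain ⟨θ, hθ, rfl⟩ := hseg
      exact ⟨(θ, a, b), ⟨hθ, ha, hb⟩, rfl⟩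
    · rintro ⟨⟨θ, a, b⟩, ⟨hθ, ha, hb⟩, rfl⟩
      refine segment_subset_convexJoin ha hb ?_
      rw [segment_eq_image]
      exact ⟨θ, hθ, rfl⟩
  rw [heq]
  exact (isCompact_Icc.prod (hs.prod ht)).image hmap

lemma isCompact_convexHull_biUnion {ι : Type*} (t : Finset ι) (A : ι → Set (WeakSpace ℝ E))
    (hA : ∀ i ∈ t, IsCompact (A i) ∧ Convex ℝ (A i)) :
    IsCompact (convexHull ℝ (⋃ i ∈ t, A i)) := by
  classical
  induction t using Finset.induction_on with
  | empty => simp [convexHull_empty]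
  | @insert a s ha ih =>
    have hs' := ih fun i hi => hA i (Finset.mem_insert_of_mem hi)
    have hAa := hA a (Finset.mem_insert_self a s)
    rw [Finset.set_biUnion_insert]
    rcases eq_empty_or_nonempty (A a) with hAe | hAne
    · rw [hAe, empty_union]; exact hs'
    rcases eq_empty_or_nonempty (⋃ i ∈ s, A i) with hre | hrne
    · rw [hre, union_empty, hAa.2.convexHull_eq]; exact hAa.1
    rw [convexHull_union hAne hrne]
    exact isCompact_convexJoin (by rw [hAa.2.convexHull_eq]; exact hAa.1) hs'

lemma extremePoints_mono {H K : Set (WeakSpace ℝ E)} {x : WeakSpace ℝ E}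
    (hxH : x ∈ H) (hHK : H ⊆ K) (hx : x ∈ Set.extremePoints ℝ K) :
    x ∈ Set.extremePoints ℝ H := by
  rw [mem_extremePoints] at hx ⊢
  exact ⟨hxH, fun a ha b hb hseg => hx.2 a (hHK ha) b (hHK hb) hseg⟩

lemma extreme_mem_of_mem_convexHull_biUnion {ι : Type*} {H : Set (WeakSpace ℝ E)}
    (hH : Convex ℝ H) {x : WeakSpace ℝ E} (hx : x ∈ Set.extremePoints ℝ H)
    (A : ι → Set (WeakSpace ℝ E)) (t : Finset ι)
    (hA : ∀ i ∈ t, Convex ℝ (A i) ∧ A i ⊆ H)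
    (hmem : x ∈ convexHull ℝ (⋃ i ∈ t, A i)) : ∃ i ∈ t, x ∈ A i := by
  classical
  induction t using Finset.induction_on with
  | empty => simp [convexHull_empty] at hmem
  | @insert a s ha ih =>
    have hAa := hA a (Finset.mem_insert_self a s)
    have hArest := fun i hi => hA i (Finset.mem_insert_of_mem hi)
    rw [Finset.set_biUnion_insert] at hmem
    rcases eq_empty_or_nonempty (A a) with hAe | hAne
    · rw [hAe, empty_union] at hmem
      obtain ⟨i, hi, hxi⟩ := ih hArest hmem
      exact ⟨i, Finset.mem_insert_of_mem hi, hxi⟩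
    rcases eq_empty_or_nonempty (⋃ i ∈ s, A i) with hre | hrne
    · rw [hre, union_empty, hAa.1.convexHull_eq] at hmem
      exact ⟨a, Finset.mem_insert_self a s, hmem⟩
    rw [convexHull_union hAne hrne, mem_convexJoin] at hmem
    obtain ⟨p, hp, q, hq, hseg⟩ := hmem
    rw [hAa.1.convexHull_eq] at hp
    have hpH : p ∈ H := hAa.2 hp
    have hqhull : q ∈ convexHull ℝ (⋃ i ∈ s, A i) := hq
    have hqH : q ∈ H :=
      convexHull_min (iUnion₂_subset fun i hi => (hArest i hi).2) hH hqhull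
    by_cases hxp : p = x
    · exact ⟨a, Finset.mem_insert_self a s, hxp ▸ hp⟩
    by_cases hxq : q = x
    · obtain ⟨i, hi, hxi⟩ := ih hArest (hxq ▸ hqhull)
      exact ⟨i, Finset.mem_insert_of_mem hi, hxi⟩
    have hopen : x ∈ openSegment ℝ p q :=
      mem_openSegment_of_ne_left_right hxp hxq hseg
    have := (mem_extremePoints.mp hx).2 p hpH q hqH hopen
    exact ⟨a, Finset.mem_insert_self a s, this.1 ▸ hp⟩

/-- Milman's theorem, specialized: if `x` is an extreme point of `K`, `S ⊆ K` is compact,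
and `x` lies in the closed convex hull of `S`, then `x ∈ S`. -/
lemma milman {K S : Set (WeakSpace ℝ E)} (hK : IsCompact K) (hKconv : Convex ℝ K)
    (hS : IsCompact S) (hSK : S ⊆ K) {x : WeakSpace ℝ E}
    (hx : x ∈ Set.extremePoints ℝ K) (hxH : x ∈ closure (convexHull ℝ S)) : x ∈ S := by
  have hSclosed : IsClosed S := hS.isClosed
  rw [← hSclosed.closure_eq]
  rw [mem_closure_iff]
  intro W0 hW0open hxW0
  -- a symmetric open neighbourhood of 0 whose translate by x is inside W0
  set N : Set (WeakSpace ℝ E) := (fun v => x + v) ⁻¹' W0 with hN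
  have hNnbhd : N ∈ 𝓝 (0 : WeakSpace ℝ E) := by
    have : Continuous fun v : WeakSpace ℝ E => x + v := continuous_const.add continuous_id
    exact (this.continuousAt (x := 0)).preimage_mem_nhds (by
      simpa using hW0open.mem_nhds hxW0)
  set N2 : Set (WeakSpace ℝ E) := N ∩ (fun v => -v) ⁻¹' N with hN2
  have hN2nbhd : N2 ∈ 𝓝 (0 : WeakSpace ℝ E) := by
    refine Filter.inter_mem hNnbhd ?_
    have hcont : Continuous fun v : WeakSpace ℝ E => -v := continuous_neg
    refine (hcont.continuousAt (x := 0)).preimage_mem_nhds ?_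
    show N ∈ 𝓝 (-(0 : WeakSpace ℝ E))
    rw [neg_zero]
    exact hNnbhd
  obtain ⟨C, ⟨hCnbhd, hCconv⟩, hCN2⟩ :=
    ((LocallyConvexSpace.convex_basis (𝕜 := ℝ) (0 : WeakSpace ℝ E)).mem_iff).mp hN2nbhd
  set V : Set (WeakSpace ℝ E) := interior C ∩ (fun v => -v) ⁻¹' interior C with hV
  have hVopen : IsOpen V := (isOpen_interior.inter (isOpen_interior.preimage continuous_neg))
  have hV0 : (0 : WeakSpace ℝ E) ∈ V := by
    constructor
    · exact mem_interior_iff_mem_nhds.mpr hCnbhd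
    · show -(0 : WeakSpace ℝ E) ∈ interior C
      rw [neg_zero]
      exact mem_interior_iff_mem_nhds.mpr hCnbhd
  have hVconv : Convex ℝ V := by
    refine (hCconv.interior).inter ?_
    have : (fun v : WeakSpace ℝ E => -v) ⁻¹' interior C = -interior C := by
      ext v; simp [Set.mem_neg]
    rw [this]
    exact (hCconv.interior).neg
  have hVsymm : ∀ v ∈ V, -v ∈ V := by
    rintro v ⟨hv1, hv2⟩
    exact ⟨hv2, by simpa using hv1⟩
  have hVN : V ⊆ N := fun v hv => (hCN2 (interior_subset hv.1)).1
  set U : Set (WeakSpace ℝ E) := (2⁻¹ : ℝ) • V with hU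
  have hUopen : IsOpen U := hVopen.smul₀ (by norm_num)
  have hU0 : (0 : WeakSpace ℝ E) ∈ U := ⟨0, hV0, smul_zero _⟩
  have hUconv : Convex ℝ U := hVconv.smul _
  have hUU : ∀ a ∈ U, ∀ b ∈ U, a + b ∈ V := by
    rintro _ ⟨va, hva, rfl⟩ _ ⟨vb, hvb, rfl⟩
    have := hVconv hva hvb (by norm_num : (0:ℝ) ≤ 2⁻¹) (by norm_num : (0:ℝ) ≤ 2⁻¹)
      (by norm_num)
    exact this
  have hclosU : closure U ⊆ V := by
    intro p hp
    have hOopen : IsOpen ((fun q => p + q) '' ((-1 : ℝ) • U)) :=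
      (Homeomorph.addLeft p).isOpenMap _ (hUopen.smul₀ (by norm_num))
    have hpO : p ∈ (fun q => p + q) '' ((-1 : ℝ) • U) :=
      ⟨(-1 : ℝ) • (0 : WeakSpace ℝ E), ⟨0, hU0, rfl⟩, by simp⟩
    obtain ⟨q, hqO, hqU⟩ := mem_closure_iff.mp hp _ hOopen hpO
    obtain ⟨mu, hmu, rfl⟩ := hqO
    obtain ⟨u, hu, rfl⟩ := hmu
    have hpe : (p + (-1 : ℝ) • u) + u = p := by
      rw [neg_one_smul]; abel
    have hmem : (p + (-1 : ℝ) • u) + u ∈ V := hUU _ hqU _ hu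
    rwa [hpe] at hmem
  -- finite subcover of S by translates of U
  obtain ⟨tS, htS, htfin, hcover⟩ := hS.elim_finite_subcover_image (b := S)
    (c := fun z => (fun u => z + u) '' U)
    (fun z _ => (Homeomorph.addLeft z).isOpenMap _ hUopen)
    (fun y hy => Set.mem_biUnion hy ⟨0, hU0, add_zero y⟩)
  set A : WeakSpace ℝ E → Set (WeakSpace ℝ E) :=
    fun z => closure (convexHull ℝ (S ∩ ((fun u => z + u) '' U))) with hA
  have hAconv : ∀ z, Convex ℝ (A z) := fun z => (convex_convexHull ℝ _).closure
  have hAH : ∀ z, A z ⊆ closure (convexHull ℝ S) :=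
    fun z => closure_mono (convexHull_mono inter_subset_left)
  have hHK : closure (convexHull ℝ S) ⊆ K :=
    closure_minimal (convexHull_min hSK hKconv) hK.isClosed
  have hAcomp : ∀ z, IsCompact (A z) := fun z =>
    hK.of_isClosed_subset isClosed_closure ((hAH z).trans hHK)
  set ft := htfin.toFinset with hft
  have hSsub : S ⊆ ⋃ z ∈ ft, A z := by
    intro y hy
    obtain ⟨z, hz, hyz⟩ := Set.mem_iUnion₂.mp (hcover hy)
    refine Set.mem_biUnion (htfin.mem_toFinset.mpr hz) ?_
    exact subset_closure (subset_convexHull ℝ _ ⟨hy, hyz⟩)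
  have hCvcomp : IsCompact (convexHull ℝ (⋃ z ∈ ft, A z)) :=
    isCompact_convexHull_biUnion ft A (fun i _ => ⟨hAcomp i, hAconv i⟩)
  have hxCv : x ∈ convexHull ℝ (⋃ z ∈ ft, A z) :=
    closure_minimal (convexHull_min (hSsub.trans (subset_convexHull ℝ _))
      (convex_convexHull ℝ _)) hCvcomp.isClosed hxH
  have hxext : x ∈ Set.extremePoints ℝ (closure (convexHull ℝ S)) :=
    extremePoints_mono hxH hHK hx
  obtain ⟨z, hzft, hzA⟩ := extreme_mem_of_mem_convexHull_biUnion
    ((convex_convexHull ℝ S).closure) hxext A ft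
    (fun i _ => ⟨hAconv i, hAH i⟩) hxCv
  have hzS : z ∈ S := htS (htfin.mem_toFinset.mp hzft)
  -- x ∈ z + closure U
  have htrans : convexHull ℝ (S ∩ ((fun u => z + u) '' U)) ⊆ (fun u => z + u) '' U := by
    exact convexHull_min inter_subset_right (hUconv.translate z)
  have hxA : x ∈ closure ((fun u => z + u) '' U) := closure_mono htrans hzA
  have hcleq : closure ((fun u => z + u) '' U) = (fun u => z + u) '' closure U :=
    ((Homeomorph.addLeft z).image_closure U).symm
  rw [hcleq] at hxA
  obtain ⟨cu, hcu, hcux⟩ := hxA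
  have hcuV : cu ∈ V := hclosU hcu
  have hzW0 : z ∈ W0 := by
    have hncu : -cu ∈ N := hVN (hVsymm _ hcuV)
    have hz' : x + (-cu) = z := by
      rw [← hcux]
      show z + cu + -cu = z
      abel
    have hmem : x + (-cu) ∈ W0 := hncu
    rwa [hz'] at hmem
  exact ⟨z, hzW0, hzS⟩

end Geometry

section Separating

/-- From weak metrizability and compactness, extract a countable separating family of
functionals with good bounds. -/
lemma exists_separating_family {K : Set (WeakSpace ℝ E)} (hcomp : IsCompact K)
    (hmetr : TopologicalSpace.MetrizableSpace K) :
    ∃ h : ℕ → E →L[ℝ] ℝ,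
      (∀ n, ‖h n‖ ≤ ((2:ℝ)⁻¹) ^ n) ∧
      (∀ n, ∀ y ∈ K, |h n y| ≤ ((2:ℝ)⁻¹) ^ n) ∧
      (∀ v ∈ K, ∀ w ∈ K, (∀ n, h n v = h n w) → v = w) := by
  haveI : CompactSpace K := isCompact_iff_compactSpace.mp hcomp
  letI : MetricSpace K := TopologicalSpace.metrizableSpaceMetric K
  -- the restriction map to C(K, ℝ)
  let ρ : (E →L[ℝ] ℝ) → C(K, ℝ) := fun g =>
    ⟨fun y => g (y : WeakSpace ℝ E), (contEval g).comp continuous_subtype_val⟩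
  let D : Set C(K, ℝ) := Set.range ρ
  haveI : Nonempty D := ⟨⟨ρ 0, Set.mem_range_self 0⟩⟩
  obtain ⟨s, hscount, hsdense⟩ := TopologicalSpace.exists_countable_dense D
  have hsne : s.Nonempty := hsdense.nonempty
  obtain ⟨f, hf⟩ := hscount.exists_eq_range hsne
  -- raw separating family
  have hsel : ∀ n, ∃ g : E →L[ℝ] ℝ, ρ g = (f n : C(K, ℝ)) := fun n => (f n).2
  choose g hg using hsel
  have hgsep : ∀ v ∈ K, ∀ w ∈ K, (∀ n, g n v = g n w) → v = w := by
    intro v hv w hw hvw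
    by_contra hne
    obtain ⟨f₀, hf₀⟩ := SeparatingDual.exists_separating_of_ne (R := ℝ) (V := E)
      (fun hh : (v : E) = w => hne hh)
    set xx : K := ⟨v, hv⟩
    set yy : K := ⟨w, hw⟩
    have hpos : 0 < |f₀ v - f₀ w| / 3 := by
      have : f₀ v - f₀ w ≠ 0 := sub_ne_zero.mpr hf₀
      positivity
    have hmemD : (⟨ρ f₀, Set.mem_range_self f₀⟩ : D) ∈ closure s := hsdense _
    obtain ⟨b, hbs, hbd⟩ := Metric.mem_closure_iff.mp hmemD _ hpos
    obtain ⟨n, rfl⟩ : ∃ n, f n = b := by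
      have := hbs
      rw [hf] at this
      obtain ⟨n, hn⟩ := this
      exact ⟨n, hn⟩
    have hdist : dist (ρ f₀) (ρ (g n)) < |f₀ v - f₀ w| / 3 := by
      rw [hg n]
      exact hbd
    have h1 : |f₀ v - g n v| ≤ dist (ρ f₀) (ρ (g n)) := by
      have := ContinuousMap.dist_apply_le_dist (f := ρ f₀) (g := ρ (g n)) xx
      rw [Real.dist_eq] at this; exact this
    have h2 : |f₀ w - g n w| ≤ dist (ρ f₀) (ρ (g n)) := by
      have := ContinuousMap.dist_apply_le_dist (f := ρ f₀) (g := ρ (g n)) yy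
      rw [Real.dist_eq] at this; exact this
    have hkey : f₀ v - f₀ w = (f₀ v - g n v) + (g n w - f₀ w) := by
      have := hvw n
      linarith [hvw n]
    have habs : |f₀ v - f₀ w| ≤ |f₀ v - g n v| + |g n w - f₀ w| := by
      rw [hkey]; exact abs_add_le _ _
    have habs2 : |g n w - f₀ w| = |f₀ w - g n w| := abs_sub_comm _ _
    rw [habs2] at habs
    linarith
  -- rescale the family
  have hBd : ∀ n, ∃ M : ℝ, 1 ≤ M ∧ ‖g n‖ ≤ M ∧ ∀ y ∈ K, |g n y| ≤ M := by
    intro n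
    obtain ⟨C0, hC0⟩ := hcomp.exists_bound_of_continuousOn (contEval (g n)).continuousOn
    refine ⟨max 1 (max ‖g n‖ C0), le_max_left _ _, ?_, fun y hy => ?_⟩
    · exact le_max_of_le_right (le_max_left _ _)
    · have := hC0 y hy
      calc |g n y| = ‖g n y‖ := rfl
        _ ≤ C0 := this
        _ ≤ max 1 (max ‖g n‖ C0) := le_max_of_le_right (le_max_right _ _)
  choose M hM1 hMn hMK using hBd
  have hMpos : ∀ n, 0 < M n := fun n => lt_of_lt_of_le one_pos (hM1 n)
  refine ⟨fun n => (((2:ℝ)⁻¹) ^ n * (M n)⁻¹) • g n, fun n => ?_, fun n y hy => ?_, ?_⟩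
  · have hMn0 : 0 < M n := hMpos n
    have e : ‖(((2:ℝ)⁻¹) ^ n * (M n)⁻¹) • g n‖
        ≤ ‖((2:ℝ)⁻¹) ^ n * (M n)⁻¹‖ * ‖g n‖ :=
      ContinuousLinearMap.opNorm_smul_le _ _
    refine e.trans ?_
    have h2 : ‖((2:ℝ)⁻¹) ^ n * (M n)⁻¹‖ = ((2:ℝ)⁻¹) ^ n * (M n)⁻¹ :=
      Real.norm_of_nonneg (by positivity)
    rw [h2]
    calc ((2:ℝ)⁻¹) ^ n * (M n)⁻¹ * ‖g n‖ ≤ ((2:ℝ)⁻¹) ^ n * (M n)⁻¹ * M n := by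
          refine mul_le_mul_of_nonneg_left (hMn n) (by positivity)
      _ = ((2:ℝ)⁻¹) ^ n := by
          rw [mul_assoc, inv_mul_cancel₀ (ne_of_gt hMn0), mul_one]
  · have hMn0 : 0 < M n := hMpos n
    have e : ((((2:ℝ)⁻¹) ^ n * (M n)⁻¹) • g n) y = (((2:ℝ)⁻¹) ^ n * (M n)⁻¹) * g n y :=
      ContinuousLinearMap.smul_apply _ _ _
    rw [e, abs_mul]
    have h2 : |((2:ℝ)⁻¹) ^ n * (M n)⁻¹| = ((2:ℝ)⁻¹) ^ n * (M n)⁻¹ := by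
      refine abs_of_pos (by positivity)
    rw [h2]
    calc ((2:ℝ)⁻¹) ^ n * (M n)⁻¹ * |g n y| ≤ ((2:ℝ)⁻¹) ^ n * (M n)⁻¹ * M n := by
          refine mul_le_mul_of_nonneg_left (hMK n y hy) (by positivity)
      _ = ((2:ℝ)⁻¹) ^ n := by
          rw [mul_assoc, inv_mul_cancel₀ (ne_of_gt hMn0), mul_one]
  · intro v hv w hw hvw
    refine hgsep v hv w hw fun n => ?_
    have hMn0 : 0 < M n := hMpos n
    have hv' := hvw n
    have e1 : ((((2:ℝ)⁻¹) ^ n * (M n)⁻¹) • g n) v = (((2:ℝ)⁻¹) ^ n * (M n)⁻¹) * g n v :=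
      ContinuousLinearMap.smul_apply _ _ _
    have e2 : ((((2:ℝ)⁻¹) ^ n * (M n)⁻¹) • g n) w = (((2:ℝ)⁻¹) ^ n * (M n)⁻¹) * g n w :=
      ContinuousLinearMap.smul_apply _ _ _
    rw [e1, e2] at hv'
    have hc : (((2:ℝ)⁻¹) ^ n * (M n)⁻¹) ≠ 0 := by positivity
    exact mul_left_cancel₀ hc hv'

end Separating

section Main

lemma extreme_subset_closure_exposed {K : Set (WeakSpace ℝ E)}
    (hconv : Convex ℝ K) (hcomp : IsCompact K)
    (hmetr : TopologicalSpace.MetrizableSpace K) :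
    Set.extremePoints ℝ K ⊆
      closure {p ∈ K | ∃ g : E →L[ℝ] ℝ, ∀ q ∈ K, q ≠ p → g q < g p} := by
  obtain ⟨h, hnorm, hbK, hsep⟩ := exists_separating_family hcomp hmetr
  have hPbK : ∀ y ∈ K, Pb h y := fun y hy =>
    ⟨1, zero_le_one, fun n => by simpa using hbK n y hy⟩
  intro x hx
  have hxK : x ∈ K := hx.1
  rw [mem_closure_iff]
  intro U hUopen hxU
  by_cases hS : (K \ U).Nonempty
  swap
  · -- K ⊆ U : take the farthest point from x itself
    have hKU : K ⊆ U := by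
      rw [not_nonempty_iff_eq_empty, diff_eq_empty] at hS
      exact hS
    obtain ⟨y0, hy0K, hy0max⟩ :=
      hcomp.exists_isMaxOn ⟨x, hxK⟩ (contOn_qd hbK (hPbK x hxK))
    obtain ⟨g, hg⟩ := exposed_of_max hnorm hbK hsep (hPbK x hxK) hy0K
      (fun y hy => hy0max hy)
    exact ⟨y0, hKU hy0K, hy0K, g, hg⟩
  · obtain ⟨s0, hs0⟩ := hS
    set S : Set (WeakSpace ℝ E) := K \ U with hSdef
    have hSclosed : IsClosed S := hcomp.isClosed.sdiff hUopen
    have hScomp : IsCompact S := hcomp.of_isClosed_subset hSclosed diff_subset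
    set H : Set (WeakSpace ℝ E) := closure (convexHull ℝ S) with hHdef
    have hSH : S ⊆ H := (subset_convexHull ℝ S).trans subset_closure
    have hHK : H ⊆ K := closure_minimal (convexHull_min diff_subset hconv) hcomp.isClosed
    have hHcomp : IsCompact H := hcomp.of_isClosed_subset isClosed_closure hHK
    have hHconv : Convex ℝ H := (convex_convexHull ℝ S).closure
    have hHne : H.Nonempty := ⟨s0, hSH hs0⟩
    have hxnH : x ∉ H := by
      intro hxH
      exact (milman hcomp hconv hScomp diff_subset hx hxH).2 hxU
    -- nearest point of H to x
    have hcont : ContinuousOn (fun y : WeakSpace ℝ E => qd h (y - x)) H :=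
      (contOn_qd hbK (hPbK x hxK)).mono hHK
    obtain ⟨hst, hstH, hstmin⟩ := hHcomp.exists_isMinOn hHne hcont
    have hstK : hst ∈ K := hHK hstH
    set u : WeakSpace ℝ E := x - hst with hu
    have hPu : Pb h u := (hPbK x hxK).sub (hPbK hst hstK)
    set d2 : ℝ := qd h u with hd2
    have hd2pos : 0 < d2 := by
      refine qd_pos hPu ?_
      by_contra hall
      push_neg at hall
      refine hxnH ?_
      have : x = hst := by
        refine hsep x hxK hst hstK fun n => ?_
        have e : h n (x - hst) = h n x - h n hst := map_sub (h n) x hst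
        have := hall n
        rw [e, sub_eq_zero] at this
        exact this
      rw [this]; exact hstH
    -- variational inequality
    have hvar : ∀ hh ∈ H, bil h u (hh - hst) ≤ 0 := by
      intro hh hhH
      have hkey : ∀ t : ℝ, 0 < t → t ≤ 1 →
          2 * bil h u (hh - hst) ≤ t * qd h (hh - hst) := by
        intro t ht0 ht1
        have hmem : (1 - t) • hst + t • hh ∈ H :=
          hHconv hstH hhH (by linarith) (le_of_lt ht0) (by ring)
        have hG := hstmin hmem
        have hPd : Pb h (hh - hst) := (hPbK hh (hHK hhH)).sub (hPbK hst hstK)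
        have hdec : (1 - t) • hst + t • hh - x = (hst - x) + t • (hh - hst) := by
          module
        have hexp : qd h ((1 - t) • hst + t • hh - x)
            = qd h (hst - x) + 2 * bil h (hst - x) (t • (hh - hst))
              + qd h (t • (hh - hst)) := by
          rw [hdec]
          exact qd_expand ((hPbK hst hstK).sub (hPbK x hxK)) (hPd.smul t)
        have hb1 : bil h (hst - x) (t • (hh - hst)) = -(t * bil h u (hh - hst)) := by
          have e1 : bil h (hst - x) (t • (hh - hst))
              = bil h (t • (hh - hst)) (hst - x) := bil_comm _ _
          have e2 : bil h (t • (hh - hst)) (hst - x)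
              = t * bil h (hh - hst) (hst - x) := bil_smul_left _ _ _
          have e3 : hst - x = -u := by rw [hu]; abel
          have e4 : bil h (hh - hst) (hst - x) = -(bil h (hh - hst) u) := by
            rw [e3, bil_neg_right]
          have e5 : bil h (hh - hst) u = bil h u (hh - hst) := bil_comm _ _
          rw [e1, e2, e4, e5]
          ring
        have hq : qd h (t • (hh - hst)) = t * (t * qd h (hh - hst)) := by
          rw [qd, bil_smul_left]
          have : bil h (hh - hst) (t • (hh - hst)) = t * qd h (hh - hst) := by
            rw [bil_comm, bil_smul_left]
            rfl
          rw [this]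
        have hGx : qd h (hst - x) ≤ qd h ((1 - t) • hst + t • hh - x) := hG
        rw [hexp, hb1, hq] at hGx
        have ht' : 0 < t * t := mul_pos ht0 ht0
        nlinarith [hGx]
      have hqd0 : 0 ≤ qd h (hh - hst) := qd_nonneg _
      exact nonpos_of_small_t hqd0 hkey
    -- key estimate on S
    have hbilS : ∀ y ∈ S, bil h u (y - x) ≤ -d2 := by
      intro y hyS
      have hyK : y ∈ K := hyS.1
      have hPy := hPbK y hyK
      have hdec : y - x = (y - hst) - u := by rw [hu]; abel
      have : bil h u ((y - hst) - u) = bil h u (y - hst) - bil h u u :=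
        bil_sub_right hPu (hPy.sub (hPbK hst hstK)) hPu
      rw [hdec, this]
      have h1 : bil h u (y - hst) ≤ 0 := hvar y (hSH hyS)
      have h2 : bil h u u = d2 := rfl
      rw [h2]
      linarith
    -- the farthest point from z := x - R • u
    set R : ℝ := 4 / d2 with hR
    have hRpos : 0 < R := by positivity
    set z : WeakSpace ℝ E := x - R • u with hz
    have hPz : Pb h z := (hPbK x hxK).sub (hPu.smul R)
    obtain ⟨y0, hy0K, hy0max⟩ := hcomp.exists_isMaxOn ⟨x, hxK⟩ (contOn_qd hbK hPz)
    have hFx : qd h (x - z) = R * (R * d2) := by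
      have e : x - z = R • u := by rw [hz]; abel
      rw [e, qd, bil_smul_left]
      have : bil h u (R • u) = R * qd h u := by
        rw [bil_comm, bil_smul_left]; rfl
      rw [this, hd2]
    have hFS : ∀ y ∈ S, qd h (y - z) < R * (R * d2) := by
      intro y hyS
      have hyK : y ∈ K := hyS.1
      have hPy := hPbK y hyK
      have hdec : y - z = (y - x) + R • u := by rw [hz]; abel
      have hexp : qd h (y - z)
          = qd h (y - x) + 2 * bil h (y - x) (R • u) + qd h (R • u) := by
        rw [hdec]
        exact qd_expand (hPy.sub (hPbK x hxK)) (hPu.smul R)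
      have hb1 : bil h (y - x) (R • u) = R * bil h u (y - x) := by
        rw [bil_comm, bil_smul_left, bil_comm]
      have hq1 : qd h (R • u) = R * (R * d2) := by
        rw [qd, bil_smul_left]
        have : bil h u (R • u) = R * qd h u := by
          rw [bil_comm, bil_smul_left]; rfl
        rw [this, hd2]
      have hqd6 : qd h (y - x) ≤ 6 := by
        refine qd_le_six fun n => ?_
        have e : h n (y - x) = h n y - h n x := map_sub (h n) y x
        rw [e]
        calc |h n y - h n x| ≤ |h n y| + |h n x| := abs_sub _ _
          _ ≤ ((2:ℝ)⁻¹) ^ n + ((2:ℝ)⁻¹) ^ n := add_le_add (hbK n y hyK) (hbK n x hxK)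
          _ = 2 * ((2:ℝ)⁻¹) ^ n := by ring
      have hbS := hbilS y hyS
      have hRd2 : R * d2 = 4 := by
        rw [hR]
        field_simp
      rw [hexp, hb1, hq1]
      have : 2 * (R * bil h u (y - x)) ≤ 2 * (R * (-d2)) := by
        have := mul_le_mul_of_nonneg_left hbS (le_of_lt hRpos)
        linarith
      nlinarith [hRd2]
    have hy0notS : y0 ∉ S := by
      intro hy0S
      have h1 : qd h (x - z) ≤ qd h (y0 - z) := hy0max hxK
      have h2 := hFS y0 hy0S
      rw [hFx] at h1
      linarith
    have hy0U : y0 ∈ U := by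
      by_contra hy0nU
      exact hy0notS ⟨hy0K, hy0nU⟩
    obtain ⟨g, hg⟩ := exposed_of_max hnorm hbK hsep hPz hy0K (fun y hy => hy0max hy)
    exact ⟨y0, hy0U, hy0K, g, hg⟩

end Main

end

end Stmt13Aux

/-- Let `E` be a real Banach space and `K` a convex, weakly compact, weakly metrizable subset
of `E`. Then the exposed points of `K` are weakly dense in its affine exposed points, which
are weakly dense in its extreme points. -/
theorem stmt_13 {E : Type*} [NormedAddCommGroup E] [NormedSpace ℝ E] [CompleteSpace E]
    (K : Set (WeakSpace ℝ E)) (hconv : Convex ℝ K) (hcomp : IsCompact K)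
    (hmetr : TopologicalSpace.MetrizableSpace K)
    (Exp AExp : Set (WeakSpace ℝ E))
    (hExp : Exp = {p ∈ K | ∃ g : E →L[ℝ] ℝ, ∀ q ∈ K, q ≠ p → g q < g p})
    (hAExp : AExp = {p : WeakSpace ℝ E | ∃ hp : p ∈ K, ∃ τ : K → ℝ, Continuous τ ∧
      (∀ (a b : WeakSpace ℝ E) (ha : a ∈ K) (hb : b ∈ K) (l : ℝ), 0 ≤ l → l ≤ 1 →
        ∀ hm : l • a + (1 - l) • b ∈ K,
          τ ⟨l • a + (1 - l) • b, hm⟩ = l * τ ⟨a, ha⟩ + (1 - l) * τ ⟨b, hb⟩) ∧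
      (∀ q : WeakSpace ℝ E, ∀ hq : q ∈ K, q ≠ p → τ ⟨q, hq⟩ < τ ⟨p, hp⟩)}) :
    AExp ⊆ closure Exp ∧ Set.extremePoints ℝ K ⊆ closure AExp := by
  have hExpAExp : Exp ⊆ AExp := by
    rw [hExp, hAExp]
    rintro p ⟨hpK, g, hg⟩
    refine ⟨hpK, fun q => g (q : WeakSpace ℝ E), ?_, ?_, ?_⟩
    · exact (Stmt13Aux.contEval g).comp continuous_subtype_val
    · intro a b ha hb l h0 h1 hm
      show g (l • a + (1 - l) • b) = l * g a + (1 - l) * g b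
      have e1 : g (l • a + (1 - l) • b) = g (l • a) + g ((1 - l) • b) := map_add g _ _
      have e2 : g (l • a) = l * g a := map_smul g l a
      have e3 : g ((1 - l) • b) = (1 - l) * g b := map_smul g (1 - l) b
      rw [e1, e2, e3]
    · intro q hq hne
      exact hg q hq hne
  have hAExpExt : AExp ⊆ Set.extremePoints ℝ K := by
    rw [hAExp]
    rintro p ⟨hpK, τ, hτc, hτaff, hτstrict⟩
    rw [mem_extremePoints]
    refine ⟨hpK, fun a ha b hb hseg => ?_⟩
    obtain ⟨l, m, hl, hm, hlm, heq⟩ := hseg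
    have hml : m = 1 - l := by linarith
    rw [hml] at heq
    have hl1 : l ≤ 1 := by linarith
    have hl0 : (0:ℝ) ≤ l := le_of_lt hl
    have hmm : l • a + (1 - l) • b ∈ K := by rw [heq]; exact hpK
    have htau : τ ⟨l • a + (1 - l) • b, hmm⟩ = l * τ ⟨a, ha⟩ + (1 - l) * τ ⟨b, hb⟩ :=
      hτaff a b ha hb l hl0 hl1 hmm
    have hpe : τ ⟨l • a + (1 - l) • b, hmm⟩ = τ ⟨p, hpK⟩ := by
      congr 1
      exact Subtype.ext heq
    have hble : τ ⟨b, hb⟩ ≤ τ ⟨p, hpK⟩ := by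
      by_cases hbp : b = p
      · have : (⟨b, hb⟩ : K) = ⟨p, hpK⟩ := Subtype.ext hbp
        rw [this]
      · exact le_of_lt (hτstrict b hb hbp)
    have hale : τ ⟨a, ha⟩ ≤ τ ⟨p, hpK⟩ := by
      by_cases hap : a = p
      · have : (⟨a, ha⟩ : K) = ⟨p, hpK⟩ := Subtype.ext hap
        rw [this]
      · exact le_of_lt (hτstrict a ha hap)
    have hap : a = p := by
      by_contra hne
      have h1 : τ ⟨a, ha⟩ < τ ⟨p, hpK⟩ := hτstrict a ha hne
      have h2 : l * τ ⟨a, ha⟩ < l * τ ⟨p, hpK⟩ := by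
        exact mul_lt_mul_of_pos_left h1 hl
      have h3 : (1 - l) * τ ⟨b, hb⟩ ≤ (1 - l) * τ ⟨p, hpK⟩ :=
        mul_le_mul_of_nonneg_left hble (by linarith)
      have := hpe ▸ htau
      nlinarith
    refine ⟨hap, ?_⟩
    -- b = p
    have hl1' : (1:ℝ) - l ≠ 0 := by linarith
    have hpp : l • p + (1 - l) • p = p := by module
    rw [hap] at heq
    have h1 : (1 - l) • b = (1 - l) • p := by
      have := heq.trans hpp.symm
      exact add_left_cancel this
    have h2 := congrArg (fun v : WeakSpace ℝ E => ((1:ℝ) - l)⁻¹ • v) h1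
    simpa [smul_smul, inv_mul_cancel₀ hl1'] using h2
  have hmain := Stmt13Aux.extreme_subset_closure_exposed hconv hcomp hmetr
  constructor
  · intro p hp
    have hpext := hAExpExt hp
    have := hmain hpext
    rw [hExp]
    exact this
  · intro p hp
    have := hmain hp
    rw [← hExp] at this
    exact closure_mono hExpAExp this
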